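/- Let z̄ be a complex number with positive imaginary part and z̄ ≠ i. Let Z be the 2×2 complex symmetric matrix with diagonal entries (z̄²−1)/(2z̄) and off-diagonal entries ±(z̄²+1)/(2z̄) (both off-diagonal entries equal, with either sign). If R is a real 2×2 diagonal matrix satisfying Z R Z = −R, then R = diag(τ, −τ) for some real τ. -/
import Mathlib

open Matrix Complex

theorem stmt_0 (z : ℂ) (hIm : 0 < z.im) (hz : z ≠ Complex.I)
    (ε : ℂ) (hε : ε = 1 ∨ ε = -1) (τ₁ τ₂ : ℝ)
    (Z : Matrix (Fin 2) (Fin 2) ℂ)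
    (hZ : Z = !![(z ^ 2 - 1) / (2 * z), ε * ((z ^ 2 + 1) / (2 * z));
                 ε * ((z ^ 2 + 1) / (2 * z)), (z ^ 2 - 1) / (2 * z)])
    (R : Matrix (Fin 2) (Fin 2) ℂ)
    (hR : R = !![(τ₁ : ℂ), 0; 0, (τ₂ : ℂ)])
    (h : Z * R * Z = -R) :
    τ₁ = -τ₂ := by
  have hz0 : z ≠ 0 := by
    intro h0; rw [h0] at hIm; simp at hIm
  have hzi : z ≠ -Complex.I := by
    intro h0
    rw [h0] at hIm
    simp at hIm
    linarith
  have hsq : z ^ 2 + 1 ≠ 0 := by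
    intro h0
    have : (z - Complex.I) * (z + Complex.I) = 0 := by
      have : Complex.I ^ 2 = -1 := Complex.I_sq
      ring_nf
      linear_combination h0 - this
    rcases mul_eq_zero.mp this with h1 | h1
    · exact hz (by linear_combination h1)
    · exact hzi (by linear_combination h1)
  subst hZ hR
  have h00 := congrFun (congrFun h 0) 0
  have h11 := congrFun (congrFun h 1) 1
  simp [Matrix.mul_apply, Fin.sum_univ_two] at h00 h11
  rcases hε with hε | hε <;> subst hε <;> field_simp at h00 h11
  all_goals {
  have key : ((z ^ 2 + 1) ^ 2) * ((τ₁ : ℂ) + τ₂) = 0 := by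
    linear_combination (h00 + h11) / 2
  have := mul_eq_zero.mp key
  rcases this with h1 | h1
  · exact absurd (pow_eq_zero_iff (by norm_num) |>.mp h1) hsq
  · have : (τ₁ : ℂ) = -τ₂ := by linear_combination h1
    exact_mod_cast this }
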